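/- Let k ≥ 2 be an integer and let α₁, …, α_{2k−2} be real numbers in [0, π/2] with ∑_{i=1}^{2k−2} α_i = π. Then ∑_{i=1}^{2k−2} (1/2)·Λ(α_i) ≤ (k − 1)·Λ(π/(2k − 2)). -/

import Mathlib

open Real MeasureTheory Set intervalIntegral

/-- The Lobachevsky function `Λ(x) = -∫₀ˣ log |2 sin t| dt`. -/
noncomputable def lobachevsky (x : ℝ) : ℝ :=
  -∫ t in (0:ℝ)..x, Real.log |2 * Real.sin t|

namespace LobAux

noncomputable def f (t : ℝ) : ℝ := Real.log |2 * Real.sin t|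

lemma measurable_f : Measurable f :=
  Real.measurable_log.comp ((continuous_abs.comp
    (continuous_const.mul Real.continuous_sin)).measurable)

lemma integrableOn_neg_log : IntegrableOn (fun t : ℝ => -Real.log t) (Ioc 0 1) volume := by
  have hcont : ContinuousOn (fun t : ℝ => t - t * Real.log t) (Icc 0 1) :=
    (continuous_id.sub Real.continuous_mul_log).continuousOn
  have hderiv : ∀ x ∈ Ioo (0:ℝ) 1, HasDerivAt (fun t : ℝ => t - t * Real.log t)
      (-Real.log x) x := by
    intro x hx
    have h1 : HasDerivAt (fun t : ℝ => t * Real.log t) (Real.log x + 1) x :=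
      Real.hasDerivAt_mul_log (ne_of_gt hx.1)
    have h2 : HasDerivAt (fun t : ℝ => t - t * Real.log t) (1 - (Real.log x + 1)) x :=
      (hasDerivAt_id x).sub h1
    convert h2 using 1; ring
  have hpos : ∀ x ∈ Ioo (0:ℝ) 1, 0 ≤ -Real.log x := by
    intro x hx
    simpa using Real.log_nonpos hx.1.le hx.2.le
  exact integrableOn_deriv_of_nonneg hcont hderiv hpos

lemma f_bound {t : ℝ} (ht : t ∈ Ioc (0:ℝ) 1) : |f t| ≤ -Real.log t + Real.log 2 := by
  have htpos : 0 < t := ht.1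
  have ht1 : t ≤ 1 := ht.2
  have htpi : t ≤ Real.pi / 2 := le_trans ht1 (by nlinarith [Real.pi_gt_three])
  have hsinpos : 0 < Real.sin t := Real.sin_pos_of_pos_of_lt_pi htpos
    (lt_of_le_of_lt htpi (by nlinarith [Real.pi_gt_three]))
  have habs : |2 * Real.sin t| = 2 * Real.sin t := abs_of_pos (by linarith)
  have hub : 2 * Real.sin t ≤ 2 * t := by
    have := Real.sin_le htpos.le; linarith
  have hlb : t ≤ 2 * Real.sin t := by
    have h := Real.mul_le_sin htpos.le htpi
    have h2 : 2 * t ≤ Real.sin t * Real.pi := by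
      rwa [div_mul_eq_mul_div, div_le_iff₀ Real.pi_pos] at h
    nlinarith [Real.pi_le_four]
  have hlogub : Real.log (2 * Real.sin t) ≤ Real.log t + Real.log 2 := by
    calc Real.log (2 * Real.sin t) ≤ Real.log (2 * t) :=
          Real.log_le_log (by linarith) hub
      _ = Real.log 2 + Real.log t := Real.log_mul (by norm_num) (ne_of_gt htpos)
      _ = Real.log t + Real.log 2 := by ring
  have hloglb : Real.log t ≤ Real.log (2 * Real.sin t) := Real.log_le_log htpos hlb
  have hlt : Real.log t ≤ 0 := Real.log_nonpos htpos.le ht1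
  rw [f, habs, abs_le]
  constructor
  · have : (0:ℝ) ≤ Real.log 2 := Real.log_nonneg (by norm_num)
    linarith
  · linarith

lemma integrableOn_f : IntegrableOn f (Ioc 0 (Real.pi / 2)) volume := by
  have h1 : IntegrableOn f (Ioc 0 1) volume := by
    have hdom : IntegrableOn (fun t : ℝ => -Real.log t + Real.log 2) (Ioc 0 1) volume :=
      integrableOn_neg_log.add (integrableOn_const measure_Ioc_lt_top.ne)
    refine Integrable.mono' hdom (measurable_f.aestronglyMeasurable.restrict) ?_
    filter_upwards [ae_restrict_mem measurableSet_Ioc] with t ht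
    exact f_bound ht
  have h2 : IntegrableOn f (Icc 1 (Real.pi / 2)) volume := by
    refine (ContinuousOn.integrableOn_Icc ?_)
    refine ContinuousOn.log ((continuous_abs.comp
      (continuous_const.mul Real.continuous_sin)).continuousOn) ?_
    intro t ht
    have hsinpos : 0 < Real.sin t := Real.sin_pos_of_pos_of_lt_pi (by linarith [ht.1])
      (lt_of_le_of_lt ht.2 (by nlinarith [Real.pi_gt_three]))
    show |2 * Real.sin t| ≠ 0
    rw [abs_of_pos (by linarith)]
    exact ne_of_gt (by linarith)
  have := h1.union h2
  refine this.mono_set ?_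
  intro t ht
  rcases le_or_gt t 1 with h | h
  · exact Or.inl ⟨ht.1, h⟩
  · exact Or.inr ⟨h.le, ht.2⟩

lemma integrableOn_f_Icc : IntegrableOn f (Icc 0 (Real.pi / 2)) volume := by
  rw [integrableOn_Icc_iff_integrableOn_Ioc]
  exact integrableOn_f

lemma intervalIntegrable_f {a b : ℝ} (ha : a ∈ Icc (0:ℝ) (Real.pi / 2))
    (hb : b ∈ Icc (0:ℝ) (Real.pi / 2)) : IntervalIntegrable f volume a b := by
  exact (integrableOn_f_Icc.mono_set (Set.uIcc_subset_Icc ha hb)).intervalIntegrable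

lemma hasDerivAt_lob {x : ℝ} (hx : x ∈ Ioo (0:ℝ) (Real.pi / 2)) :
    HasDerivAt lobachevsky (-(f x)) x := by
  have hint : IntervalIntegrable f volume 0 x :=
    intervalIntegrable_f ⟨le_refl _, by linarith [Real.pi_pos]⟩ ⟨hx.1.le, hx.2.le⟩
  have hsinpos : 0 < Real.sin x := Real.sin_pos_of_pos_of_lt_pi hx.1
    (lt_of_lt_of_le hx.2 (by linarith [Real.pi_pos]))
  have hne : |2 * Real.sin x| ≠ 0 := by
    rw [abs_of_pos (by linarith)]; linarith
  have hcont : ContinuousAt f x :=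
    ContinuousAt.log ((continuous_abs.comp
      (continuous_const.mul Real.continuous_sin)).continuousAt) hne
  have h := intervalIntegral.integral_hasDerivAt_right hint
    measurable_f.aestronglyMeasurable.stronglyMeasurableAtFilter hcont
  exact h.neg

lemma concaveOn_lob : ConcaveOn ℝ (Icc 0 (Real.pi / 2)) lobachevsky := by
  have hpi : (0:ℝ) ≤ Real.pi / 2 := by positivity
  have hint : interior (Icc (0:ℝ) (Real.pi / 2)) = Ioo 0 (Real.pi / 2) := interior_Icc
  refine AntitoneOn.concaveOn_of_deriv (convex_Icc _ _) ?_ ?_ ?_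
  · have : ContinuousOn (fun x => ∫ t in (0:ℝ)..x, f t) (Icc 0 (Real.pi / 2)) := by
      have := continuousOn_primitive_interval (μ := volume) (f := f) (a := 0)
        (b := Real.pi / 2) (by rw [Set.uIcc_of_le hpi]; exact integrableOn_f_Icc)
      rwa [Set.uIcc_of_le hpi] at this
    exact this.neg
  · rw [hint]
    intro x hx
    exact (hasDerivAt_lob hx).differentiableAt.differentiableWithinAt
  · rw [hint]
    intro x hx y hy hxy
    rw [(hasDerivAt_lob hx).deriv, (hasDerivAt_lob hy).deriv]
    have hsx : 0 < Real.sin x := Real.sin_pos_of_pos_of_lt_pi hx.1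
      (lt_of_lt_of_le hx.2 (by linarith [Real.pi_pos]))
    have hsxy : Real.sin x ≤ Real.sin y := by
      apply Real.strictMonoOn_sin.monotoneOn ⟨by linarith [hx.1], hx.2.le⟩
        ⟨by linarith [hy.1], hy.2.le⟩ hxy
    have : f x ≤ f y := by
      rw [f, f, abs_of_pos (by linarith), abs_of_pos (by linarith [hsx.trans_le hsxy])]
      exact Real.log_le_log (by linarith) (by linarith)
    linarith

end LobAux

/-- For an integer `k ≥ 2` and reals `α₁, …, α_{2k−2} ∈ [0, π/2]` summing to `π`,
`∑ (1/2)·Λ(αᵢ) ≤ (k − 1)·Λ(π/(2k − 2))`. -/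
theorem cone_volume_bound_quasi_incident (k : ℕ) (hk : 2 ≤ k)
    (α : Fin (2 * k - 2) → ℝ) (hα : ∀ i, α i ∈ Set.Icc 0 (Real.pi / 2))
    (hsum : ∑ i, α i = Real.pi) :
    ∑ i, (1 / 2) * lobachevsky (α i) ≤
      ((k : ℝ) - 1) * lobachevsky (Real.pi / (2 * (k : ℝ) - 2)) := by
  have hnR : ((2 * k - 2 : ℕ) : ℝ) = 2 * (k : ℝ) - 2 := by
    push_cast [Nat.cast_sub (by omega : 2 ≤ 2 * k)]
    ring
  have hnpos : (0:ℝ) < ((2 * k - 2 : ℕ) : ℝ) := by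
    rw [hnR]
    have : (2:ℝ) ≤ (k:ℝ) := by exact_mod_cast hk
    linarith
  have hjensen := LobAux.concaveOn_lob.le_map_sum (t := Finset.univ)
    (w := fun _ : Fin (2 * k - 2) => ((2 * k - 2 : ℕ) : ℝ)⁻¹)
    (p := α) (fun i _ => by positivity) (by
      rw [Finset.sum_const, Finset.card_univ, Fintype.card_fin, nsmul_eq_mul]
      field_simp) (fun i _ => hα i)
  have hpt : ∑ i, ((2 * k - 2 : ℕ) : ℝ)⁻¹ • α i = Real.pi / (2 * (k : ℝ) - 2) := by
    rw [← Finset.smul_sum, hsum, smul_eq_mul, inv_mul_eq_div, hnR]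
  rw [hpt] at hjensen
  have hscale : ∑ i, (1 / 2 : ℝ) * lobachevsky (α i) =
      (((2 * k - 2 : ℕ) : ℝ) / 2) * ∑ i, ((2 * k - 2 : ℕ) : ℝ)⁻¹ • lobachevsky (α i) := by
    rw [Finset.mul_sum]
    refine Finset.sum_congr rfl fun i _ => ?_
    rw [smul_eq_mul]
    field_simp
  rw [hscale]
  have hk1 : (((2 * k - 2 : ℕ) : ℝ) / 2) = (k : ℝ) - 1 := by rw [hnR]; ring
  calc (((2 * k - 2 : ℕ) : ℝ) / 2) * ∑ i, ((2 * k - 2 : ℕ) : ℝ)⁻¹ • lobachevsky (α i)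
      ≤ (((2 * k - 2 : ℕ) : ℝ) / 2) * lobachevsky (Real.pi / (2 * (k:ℝ) - 2)) :=
        mul_le_mul_of_nonneg_left hjensen (by positivity)
    _ = ((k : ℝ) - 1) * lobachevsky (Real.pi / (2 * (k:ℝ) - 2)) := by rw [hk1]
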